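/- Let H be a complex Hilbert space and u ∈ H. Suppose (Φ_i) is an increasing sequence of closed subspaces of H with 0 ∈ Φ_0, and u_i is the orthogonal projection of u onto Φ_i. Assume that for each i ≥ 1 there is a unit vector ψ_i ∈ Φ_i with ‖(u - u_{i-1})/‖u - u_{i-1}‖ - ψ_i‖ ≤ 2^{3/2} τ_i/(2 - τ_i) whenever u ≠ u_{i-1}, where 0 < τ_i < 1. Then for every i, ‖u - u_i‖ ≤ ‖u - u_0‖ · ∏_{j=1}^{i} min{1, 2^{3/2} τ_j/(2 - τ_j)}. -/

import Mathlib

theorem stmt_5 {H : Type*} [NormedAddCommGroup H] [InnerProductSpace ℂ H]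
    [CompleteSpace H]
    (Φ : ℕ → Submodule ℂ H) [∀ i, CompleteSpace (Φ i)] (hmono : Monotone Φ)
    (u : H) (τ : ℕ → ℝ) (hτ0 : ∀ i, 0 < τ i) (hτ1 : ∀ i, τ i < 1)
    (U : ℕ → H) (hU : ∀ i, U i = (Submodule.orthogonalProjectionOnto (Φ i) u : H))
    (hψ : ∀ i : ℕ, 1 ≤ i → u ≠ U (i - 1) →
      ∃ ψ ∈ Φ i, ‖ψ‖ = 1 ∧
        ‖(‖u - U (i - 1)‖ : ℝ)⁻¹ • (u - U (i - 1)) - ψ‖ ≤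
          2 ^ ((3 : ℝ) / 2) * τ i / (2 - τ i)) :
    ∀ i : ℕ, ‖u - U i‖ ≤
      ‖u - U 0‖ * ∏ j ∈ Finset.Icc 1 i, min 1 (2 ^ ((3 : ℝ) / 2) * τ j / (2 - τ j)) := by
  -- minimality of the orthogonal projection
  have hmin : ∀ (k : ℕ) (v : H), v ∈ Φ k → ‖u - U k‖ ≤ ‖u - v‖ := by
    intro k v hv
    rw [hU k, Submodule.coe_orthogonalProjectionOnto_apply, Submodule.starProjection_minimal]
    exact ciInf_le ⟨0, fun x ⟨w, hw⟩ => hw ▸ norm_nonneg _⟩ (⟨v, hv⟩ : Φ k)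
  intro i
  induction i with
  | zero => simp
  | succ i ih =>
    set c : ℝ := 2 ^ ((3 : ℝ) / 2) * τ (i + 1) / (2 - τ (i + 1)) with hc
    have hc0 : 0 ≤ c := by
      have := hτ0 (i + 1)
      have := hτ1 (i + 1)
      apply div_nonneg
      · positivity
      · linarith
    have hUmem : U i ∈ Φ (i + 1) := by
      rw [hU i]
      exact hmono (Nat.le_succ i) (Submodule.orthogonalProjectionOnto (Φ i) u).2
    have h1 : ‖u - U (i + 1)‖ ≤ ‖u - U i‖ := hmin (i + 1) (U i) hUmem
    have key : ‖u - U (i + 1)‖ ≤ min 1 c * ‖u - U i‖ := by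
      rcases eq_or_ne u (U i) with heq | hne
      · have : ‖u - U i‖ = 0 := by rw [heq, sub_self, norm_zero]
        rw [this, mul_zero]
        linarith [h1, this]
      · obtain ⟨ψ, hψmem, hψnorm, hψle⟩ := hψ (i + 1) (Nat.le_add_left 1 i)
          (by simpa using hne)
        have hpos : 0 < ‖u - U i‖ := norm_sub_pos_iff.mpr hne
        have h2 : ‖u - U (i + 1)‖ ≤ c * ‖u - U i‖ := by
          have hv : U i + ‖u - U i‖ • ψ ∈ Φ (i + 1) :=
            (Φ (i + 1)).add_mem hUmem ((Φ (i + 1)).smul_of_tower_mem _ hψmem)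
          refine (hmin (i + 1) _ hv).trans ?_
          have heq2 : u - (U i + ‖u - U i‖ • ψ)
              = ‖u - U i‖ • ((‖u - U i‖ : ℝ)⁻¹ • (u - U i) - ψ) := by
            rw [smul_sub, smul_smul, mul_inv_cancel₀ hpos.ne', one_smul]
            abel
          rw [heq2, norm_smul]
          simp only [Real.norm_eq_abs, abs_of_pos hpos]
          rw [mul_comm]
          have := by simpa using hψle
          exact mul_le_mul_of_nonneg_right this hpos.le
        rw [min_mul_of_nonneg _ _ (norm_nonneg _)]
        simp only [one_mul]
        exact le_min h1 h2
    rw [Finset.prod_Icc_succ_top (Nat.le_add_left 1 i), ← mul_assoc]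
    calc ‖u - U (i + 1)‖ ≤ min 1 c * ‖u - U i‖ := key
      _ ≤ min 1 c * (‖u - U 0‖ * ∏ j ∈ Finset.Icc 1 i,
            min 1 (2 ^ ((3 : ℝ) / 2) * τ j / (2 - τ j))) :=
          mul_le_mul_of_nonneg_left ih (le_min zero_le_one hc0)
      _ = _ := by ring
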